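/- Let (E, 𝓘) be a finite set system where 𝓘 ⊆ 2^E is downward closed, with rank r = max{|S| : S ∈ 𝓘}, let w : E → ℝ≥0 be nonnegative weights and p ∈ (0,1]. For every subset S ⊆ E fix OPTSOL(S) ∈ 𝓘 with OPTSOL(S) ⊆ S maximizing w(OPTSOL(S)) = Σ_{e∈OPTSOL(S)} w_e, and set q_e = Pr[e ∈ OPTSOL(R)] (so q_e ≤ p for all e, and q ∈ P_𝓘). Suppose P_𝓘 admits a c-balanced contention resolution scheme. Let Q be a random subset of E, independent of R, containing each element e independently with probability q_e/p. Then E[|Q|] ≤ r/p, and E[ max{ w(T) : T ⊆ Q ∩ R, T ∈ 𝓘 } ] ≥ c · E[ w(OPTSOL(R)) ]. -/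
import Mathlib


open Finset

noncomputable section

variable {E : Type*} [Fintype E] [DecidableEq E]

/-- Probability that an independent-inclusion random subset of `E`, in which each element `e`
is included independently with probability `π e`, is exactly the set `A`. -/
def prodWeight (π : E → ℝ) (A : Finset E) : ℝ :=
  (∏ e ∈ A, π e) * ∏ e ∈ Aᶜ, (1 - π e)

/-- Expectation of `g` under the independent-inclusion random subset with marginals `π`. -/
def expec (π : E → ℝ) (g : Finset E → ℝ) : ℝ :=
  ∑ A : Finset E, prodWeight π A * g A

/-- Total (additive) weight of a finite set. -/
def setWeight (w : E → ℝ) (T : Finset E) : ℝ := ∑ e ∈ T, w e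

/-- Value of a best feasible (w.r.t. `𝓘`) subset of `S`, for the objective `f`. -/
def bestVal (𝓘 : Set (Finset E)) (f : Finset E → ℝ) (S : Finset E) : ℝ :=
  sSup (f '' {T | T ⊆ S ∧ T ∈ 𝓘})

/-- The polytope `P_𝓘`: the convex hull of indicator vectors of feasible sets. -/
def systemPolytope (𝓘 : Set (Finset E)) : Set (E → ℝ) :=
  convexHull ℝ ((fun (I : Finset E) (e : E) => if e ∈ I then (1 : ℝ) else 0) '' 𝓘)

/-- A contention resolution scheme for the set system `𝓘`: `out x A B` is the probability
that on input marginals `x` and active set `A` the scheme outputs the set `B`. -/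
structure CRS (E : Type*) [Fintype E] [DecidableEq E] (𝓘 : Set (Finset E)) where
  out : (E → ℝ) → Finset E → Finset E → ℝ
  nonneg : ∀ x A B, 0 ≤ out x A B
  sum_one : ∀ x A, ∑ B : Finset E, out x A B = 1
  subset_of : ∀ x A B, out x A B ≠ 0 → B ⊆ A
  indep_of : ∀ x A B, out x A B ≠ 0 → B ∈ 𝓘

/-- `π.selProb x A e` is the probability that `e` belongs to the output of the scheme `π`
on input `(x, A)`. -/
def CRS.selProb {𝓘 : Set (Finset E)} (π : CRS E 𝓘) (x : E → ℝ) (A : Finset E) (e : E) : ℝ :=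
  ∑ B : Finset E, if e ∈ B then π.out x A B else 0

/-- `π` is `c`-balanced: for every `x ∈ P_𝓘` and every element `e` with `x e > 0`,
`Pr[e ∈ π_x(R(x))] ≥ c · x e`, i.e. `Pr[e ∈ π_x(R(x)) ∣ e ∈ R(x)] ≥ c`. -/
def CRS.Balanced {𝓘 : Set (Finset E)} (π : CRS E 𝓘) (c : ℝ) : Prop :=
  ∀ x ∈ systemPolytope 𝓘, ∀ e : E, 0 < x e →
    c * x e ≤ expec x fun A => π.selProb x A e

/-- `π` is a monotone scheme: `Pr[e ∈ π_x(A₁)] ≥ Pr[e ∈ π_x(A₂)]` whenever `e ∈ A₁ ⊆ A₂`. -/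
def CRS.MonotoneScheme {𝓘 : Set (Finset E)} (π : CRS E 𝓘) : Prop :=
  ∀ x : E → ℝ, ∀ A₁ A₂ : Finset E, A₁ ⊆ A₂ → ∀ e ∈ A₁,
    π.selProb x A₂ e ≤ π.selProb x A₁ e


section CRSHelpers

lemma prodWeight_eq_prod (π : E → ℝ) (A : Finset E) :
    prodWeight π A = ∏ e, (if e ∈ A then π e else 1 - π e) := by
  rw [Finset.prod_ite]
  simp [prodWeight, Finset.filter_mem_eq_inter, Finset.compl_eq_univ_sdiff, Finset.filter_not]

lemma sum_prod_ite (a b : E → ℝ) :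
    ∑ A : Finset E, ∏ e, (if e ∈ A then a e else b e) = ∏ e, (a e + b e) := by
  rw [Finset.prod_add, ← Finset.powerset_univ]
  refine Finset.sum_congr rfl fun t ht => ?_
  rw [Finset.prod_ite]
  congr 1
  · congr 1; ext x; simp
  · congr 1; ext x; simp

lemma sum_prodWeight (π : E → ℝ) : ∑ A : Finset E, prodWeight π A = 1 := by
  simp only [prodWeight_eq_prod, sum_prod_ite]
  simp

lemma expec_const (π : E → ℝ) (C : ℝ) : expec π (fun _ => C) = C := by
  simp [expec, ← Finset.sum_mul, sum_prodWeight]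

lemma expec_indicator (π : E → ℝ) (e : E) :
    expec π (fun A => if e ∈ A then 1 else 0) = π e := by
  unfold expec
  have h1 : ∀ A : Finset E, prodWeight π A * (if e ∈ A then (1:ℝ) else 0)
      = ∏ e' : E, (if e' ∈ A then π e' else if e' = e then 0 else 1 - π e') := by
    intro A
    rw [prodWeight_eq_prod]
    by_cases hA : e ∈ A
    · rw [if_pos hA, mul_one]
      refine Finset.prod_congr rfl fun x _ => ?_
      by_cases hx : x ∈ A
      · simp [hx]
      · simp [hx, show x ≠ e from fun h => hx (h ▸ hA)]
    · rw [if_neg hA, mul_zero]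
      rw [eq_comm, Finset.prod_eq_zero (Finset.mem_univ e)]
      simp [hA]
  simp only [h1, sum_prod_ite]
  have h2 : ∀ e' : E, (π e' + if e' = e then 0 else 1 - π e') = if e' = e then π e' else 1 := by
    intro e'; by_cases h : e' = e <;> simp [h]
  simp only [h2]
  simp

lemma prodWeight_nonneg (π : E → ℝ) (h0 : ∀ e, 0 ≤ π e) (h1 : ∀ e, π e ≤ 1) (A : Finset E) :
    0 ≤ prodWeight π A :=
  mul_nonneg (Finset.prod_nonneg fun e _ => h0 e)
    (Finset.prod_nonneg fun e _ => by linarith [h1 e])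

lemma expec_mono {π : E → ℝ} (h : ∀ A : Finset E, 0 ≤ prodWeight π A)
    {g g' : Finset E → ℝ} (hgg : ∀ A, g A ≤ g' A) : expec π g ≤ expec π g' :=
  Finset.sum_le_sum fun A _ => mul_le_mul_of_nonneg_left (hgg A) (h A)

lemma expec_nonneg {π : E → ℝ} (h : ∀ A : Finset E, 0 ≤ prodWeight π A)
    {g : Finset E → ℝ} (hg : ∀ A, 0 ≤ g A) : 0 ≤ expec π g :=
  Finset.sum_nonneg fun A _ => mul_nonneg (h A) (hg A)

lemma dagger (π₁ π₂ : E → ℝ) (S : Finset E) :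
    ∑ Q : Finset E, ∑ A : Finset E,
      prodWeight π₁ Q * prodWeight π₂ A * (if Q ∩ A = S then 1 else 0)
      = prodWeight (fun e => π₁ e * π₂ e) S := by
  have hind : ∀ Q A : Finset E, (if Q ∩ A = S then (1:ℝ) else 0)
      = ∏ e : E, (if ((e ∈ Q ∧ e ∈ A) ↔ e ∈ S) then (1:ℝ) else 0) := by
    intro Q A
    by_cases h : Q ∩ A = S
    · rw [if_pos h]
      rw [eq_comm, Finset.prod_eq_one]
      intro e _
      rw [if_pos]
      rw [← h, Finset.mem_inter]
    · rw [if_neg h]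
      obtain ⟨e, he⟩ : ∃ e, ¬((e ∈ Q ∧ e ∈ A) ↔ e ∈ S) := by
        by_contra hc
        push_neg at hc
        exact h (Finset.ext fun e => by simp only [Finset.mem_inter]; exact hc e)
      rw [eq_comm]
      exact Finset.prod_eq_zero (Finset.mem_univ e) (by rw [if_neg he])
  have hcomb : ∀ Q A : Finset E,
      prodWeight π₁ Q * prodWeight π₂ A * (if Q ∩ A = S then (1:ℝ) else 0)
      = ∏ e : E, ((if e ∈ Q then π₁ e else 1 - π₁ e) * (if e ∈ A then π₂ e else 1 - π₂ e)
          * (if ((e ∈ Q ∧ e ∈ A) ↔ e ∈ S) then (1:ℝ) else 0)) := by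
    intro Q A
    rw [hind, prodWeight_eq_prod, prodWeight_eq_prod, ← Finset.prod_mul_distrib,
      ← Finset.prod_mul_distrib]
  simp only [hcomb]
  have hinner : ∀ Q : Finset E,
      ∑ A : Finset E, ∏ e : E, ((if e ∈ Q then π₁ e else 1 - π₁ e)
          * (if e ∈ A then π₂ e else 1 - π₂ e)
          * (if ((e ∈ Q ∧ e ∈ A) ↔ e ∈ S) then (1:ℝ) else 0))
      = ∏ e : E, (if e ∈ Q
          then π₁ e * π₂ e * (if e ∈ S then (1:ℝ) else 0)
              + π₁ e * (1 - π₂ e) * (if e ∈ S then (0:ℝ) else 1)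
          else (1 - π₁ e) * π₂ e * (if e ∈ S then (0:ℝ) else 1)
              + (1 - π₁ e) * (1 - π₂ e) * (if e ∈ S then (0:ℝ) else 1)) := by
    intro Q
    have step : ∀ A : Finset E, ∏ e : E, ((if e ∈ Q then π₁ e else 1 - π₁ e)
          * (if e ∈ A then π₂ e else 1 - π₂ e)
          * (if ((e ∈ Q ∧ e ∈ A) ↔ e ∈ S) then (1:ℝ) else 0))
        = ∏ e : E, (if e ∈ A
            then (if e ∈ Q then π₁ e else 1 - π₁ e) * π₂ e
                * (if ((e ∈ Q) ↔ e ∈ S) then (1:ℝ) else 0)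
            else (if e ∈ Q then π₁ e else 1 - π₁ e) * (1 - π₂ e)
                * (if e ∈ S then (0:ℝ) else 1)) := by
      intro A
      refine Finset.prod_congr rfl fun e _ => ?_
      by_cases hA : e ∈ A <;> by_cases hQ : e ∈ Q <;> by_cases hS : e ∈ S <;>
        simp [hA, hQ, hS]
    simp only [step, sum_prod_ite]
    refine Finset.prod_congr rfl fun e _ => ?_
    by_cases hQ : e ∈ Q <;> by_cases hS : e ∈ S <;> simp [hQ, hS] <;> try ring
  simp only [hinner, sum_prod_ite, prodWeight_eq_prod]
  refine Finset.prod_congr rfl fun e _ => ?_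
  by_cases hS : e ∈ S <;> simp [hS] <;> try ring

lemma expec_inter (π₁ π₂ : E → ℝ) (g : Finset E → ℝ) :
    expec π₁ (fun Q => expec π₂ (fun A => g (Q ∩ A))) =
    expec (fun e => π₁ e * π₂ e) g := by
  unfold expec
  have hg : ∀ Q A : Finset E, g (Q ∩ A) = ∑ S : Finset E, (if Q ∩ A = S then 1 else 0) * g S := by
    intro Q A
    rw [Finset.sum_congr rfl fun S _ => ite_mul (α := ℝ) _ _ _ _]
    simp
  calc ∑ Q : Finset E, prodWeight π₁ Q * ∑ A : Finset E, prodWeight π₂ A * g (Q ∩ A)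
      = ∑ S : Finset E, (∑ Q : Finset E, ∑ A : Finset E,
          prodWeight π₁ Q * prodWeight π₂ A * (if Q ∩ A = S then 1 else 0)) * g S := by
        simp only [hg, Finset.mul_sum, Finset.sum_mul]
        calc ∑ Q : Finset E, ∑ A : Finset E, ∑ S : Finset E,
              prodWeight π₁ Q * (prodWeight π₂ A * ((if Q ∩ A = S then (1:ℝ) else 0) * g S))
            = ∑ Q : Finset E, ∑ S : Finset E, ∑ A : Finset E,
              prodWeight π₁ Q * (prodWeight π₂ A * ((if Q ∩ A = S then (1:ℝ) else 0) * g S)) :=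
              Finset.sum_congr rfl fun _ _ => Finset.sum_comm
          _ = ∑ S : Finset E, ∑ Q : Finset E, ∑ A : Finset E,
              prodWeight π₁ Q * (prodWeight π₂ A * ((if Q ∩ A = S then (1:ℝ) else 0) * g S)) :=
              Finset.sum_comm
          _ = _ := Finset.sum_congr rfl fun S _ => Finset.sum_congr rfl fun Q _ =>
              Finset.sum_congr rfl fun A _ => by ring
    _ = ∑ S : Finset E, prodWeight (fun e => π₁ e * π₂ e) S * g S := by
        simp only [dagger]

end CRSHelpers

/-- The generic contention-resolution-based sparsifier for additive
objectives: if `P_𝓘` admits a `c`-balanced CRS, then the random set `Q` including each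
element independently with probability `q_e / p` has expected size at most `r/p`
(degree `1/p`), and the expected optimum of the sparsified instance is at least
`c` times the stochastic optimum. -/
theorem stmt_0
    (𝓘 : Set (Finset E))
    (hdown : ∀ S ∈ 𝓘, ∀ T ⊆ S, T ∈ 𝓘)
    (r : ℕ) (hr : IsGreatest {n : ℕ | ∃ S ∈ 𝓘, S.card = n} r)
    (w : E → ℝ) (hw : ∀ e, 0 ≤ w e)
    (p : ℝ) (hp0 : 0 < p) (hp1 : p ≤ 1)
    (OPTSOL : Finset E → Finset E)
    (hOmem : ∀ S, OPTSOL S ∈ 𝓘)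
    (hOsub : ∀ S, OPTSOL S ⊆ S)
    (hOmax : ∀ S, ∀ T ⊆ S, T ∈ 𝓘 → setWeight w T ≤ setWeight w (OPTSOL S))
    (q : E → ℝ)
    (hq : ∀ e, q e = expec (fun _ => p) (fun A => if e ∈ OPTSOL A then 1 else 0))
    (c : ℝ) (π : CRS E 𝓘) (hbal : π.Balanced c) :
    expec (fun e => q e / p) (fun Q => (Q.card : ℝ)) ≤ (r : ℝ) / p ∧
      c * expec (fun _ => p) (fun A => setWeight w (OPTSOL A)) ≤
        expec (fun e => q e / p) (fun Q =>
          expec (fun _ => p) (fun A => bestVal 𝓘 (setWeight w) (Q ∩ A))) := by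
    -- nonnegativity of the weights
  have hpwp : ∀ A : Finset E, 0 ≤ prodWeight (fun _ : E => p) A :=
    prodWeight_nonneg _ (fun _ => hp0.le) (fun _ => hp1)
  have hq0 : ∀ e, 0 ≤ q e := by
    intro e
    rw [hq]
    exact expec_nonneg hpwp fun A => by positivity
  have hq1 : ∀ e, q e ≤ 1 := by
    intro e
    rw [hq]
    calc expec (fun _ => p) (fun A => if e ∈ OPTSOL A then (1:ℝ) else 0)
        ≤ expec (fun _ => p) (fun _ => (1:ℝ)) :=
          expec_mono hpwp fun A => by split <;> norm_num
      _ = 1 := expec_const _ _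
  have hpwq : ∀ A : Finset E, 0 ≤ prodWeight q A := prodWeight_nonneg q hq0 hq1
  -- expected cardinality formula
  have hcard : ∀ π' : E → ℝ, expec π' (fun A => (A.card : ℝ)) = ∑ e, π' e := by
    intro π'
    have hrep : ∀ A : Finset E, ((A.card : ℝ)) = ∑ e : E, (if e ∈ A then (1:ℝ) else 0) := by
      intro A
      rw [Finset.sum_boole]
      simp [Finset.filter_mem_eq_inter]
    unfold expec
    simp only [hrep, Finset.mul_sum]
    rw [Finset.sum_comm]
    exact Finset.sum_congr rfl fun e _ => expec_indicator π' e
  constructor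
  · -- Part 1
    have hsumq : ∑ e, q e ≤ (r : ℝ) := by
      have h1 : ∑ e, q e = expec (fun _ => p) (fun A => ((OPTSOL A).card : ℝ)) := by
        simp only [hq]
        unfold expec
        rw [Finset.sum_comm]
        refine Finset.sum_congr rfl fun A _ => ?_
        rw [← Finset.mul_sum]
        congr 1
        rw [Finset.sum_boole]
        simp [Finset.filter_mem_eq_inter]
      rw [h1]
      calc expec (fun _ => p) (fun A => ((OPTSOL A).card : ℝ))
          ≤ expec (fun _ => p) (fun _ => (r : ℝ)) :=
            expec_mono hpwp fun A => by
              exact_mod_cast hr.2 ⟨OPTSOL A, hOmem A, rfl⟩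
        _ = (r : ℝ) := expec_const _ _
    rw [hcard, ← Finset.sum_div]
    gcongr
  · -- Part 2
    -- q belongs to the polytope
    have hqmem : q ∈ systemPolytope 𝓘 := by
      rw [systemPolytope]
      have heq : q = Finset.centerMass (univ : Finset (Finset E))
          (fun A => prodWeight (fun _ : E => p) A)
          (fun A => fun e => if e ∈ OPTSOL A then (1:ℝ) else 0) := by
        funext e
        rw [Finset.centerMass, sum_prodWeight]
        simp only [inv_one, one_smul]
        rw [hq]
        unfold expec
        rw [Finset.sum_apply]
        exact Finset.sum_congr rfl fun A _ => by simp
      rw [heq]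
      exact Finset.centerMass_mem_convexHull (univ : Finset (Finset E))
        (fun A _ => hpwp A)
        (by rw [sum_prodWeight]; norm_num)
        (fun A _ => ⟨OPTSOL A, hOmem A, rfl⟩)
    -- balancedness for every element
    have hbal' : ∀ e, c * q e ≤ expec q (fun S => π.selProb q S e) := by
      intro e
      rcases (hq0 e).lt_or_eq with h | h
      · exact hbal q hqmem e h
      · rw [← h, mul_zero]
        refine expec_nonneg hpwq fun S => ?_
        refine Finset.sum_nonneg fun B _ => ?_
        split
        · exact π.nonneg q S B
        · exact le_rfl
    -- best value dominates any feasible subset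
    have hbest : ∀ S : Finset E, ∀ B : Finset E, B ⊆ S → B ∈ 𝓘 →
        setWeight w B ≤ bestVal 𝓘 (setWeight w) S := by
      intro S B hBS hBI
      refine le_csSup ?_ ⟨B, ⟨hBS, hBI⟩, rfl⟩
      exact ((Set.toFinite _).image _).bddAbove
    -- step (d): expected CRS weight is at most the best value
    have hstepd : ∀ S : Finset E,
        ∑ e, w e * π.selProb q S e ≤ bestVal 𝓘 (setWeight w) S := by
      intro S
      have h1 : ∑ e, w e * π.selProb q S e
          = ∑ B : Finset E, π.out q S B * setWeight w B := by
        unfold CRS.selProb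
        simp only [Finset.mul_sum]
        rw [Finset.sum_comm]
        refine Finset.sum_congr rfl fun B _ => ?_
        have h2 : ∀ e : E, w e * (if e ∈ B then π.out q S B else 0)
            = (if e ∈ B then π.out q S B * w e else 0) := by
          intro e; split <;> ring
        simp only [h2]
        rw [Finset.sum_ite_mem, Finset.univ_inter, setWeight, Finset.mul_sum]
      rw [h1]
      calc ∑ B : Finset E, π.out q S B * setWeight w B
          ≤ ∑ B : Finset E, π.out q S B * bestVal 𝓘 (setWeight w) S := by
            refine Finset.sum_le_sum fun B _ => ?_
            by_cases hB : π.out q S B = 0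
            · rw [hB, zero_mul, zero_mul]
            · exact mul_le_mul_of_nonneg_left
                (hbest S B (π.subset_of q S B hB) (π.indep_of q S B hB)) (π.nonneg q S B)
        _ = bestVal 𝓘 (setWeight w) S := by
            rw [← Finset.sum_mul, π.sum_one, one_mul]
    -- the main chain
    have key : c * expec (fun _ => p) (fun A => setWeight w (OPTSOL A))
        = ∑ e, w e * (c * q e) := by
      have h1 : expec (fun _ => p) (fun A => setWeight w (OPTSOL A)) = ∑ e, w e * q e := by
        unfold expec
        have hrep : ∀ A : Finset E, setWeight w (OPTSOL A)
            = ∑ e : E, (if e ∈ OPTSOL A then w e else 0) := by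
          intro A
          rw [Finset.sum_ite_mem, Finset.univ_inter, setWeight]
        simp only [hrep, Finset.mul_sum]
        rw [Finset.sum_comm]
        refine Finset.sum_congr rfl fun e _ => ?_
        rw [hq]
        unfold expec
        rw [Finset.mul_sum]
        refine Finset.sum_congr rfl fun A _ => ?_
        by_cases he : e ∈ OPTSOL A <;> simp [he] <;> ring
      rw [h1, Finset.mul_sum]
      exact Finset.sum_congr rfl fun e _ => by ring
    calc c * expec (fun _ => p) (fun A => setWeight w (OPTSOL A))
        = ∑ e, w e * (c * q e) := key
      _ ≤ ∑ e, w e * expec q (fun S => π.selProb q S e) :=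
          Finset.sum_le_sum fun e _ => mul_le_mul_of_nonneg_left (hbal' e) (hw e)
      _ = expec q (fun S => ∑ e, w e * π.selProb q S e) := by
          unfold expec
          simp only [Finset.mul_sum]
          rw [Finset.sum_comm]
          exact Finset.sum_congr rfl fun S _ => Finset.sum_congr rfl fun e _ => by ring
      _ ≤ expec q (fun S => bestVal 𝓘 (setWeight w) S) := expec_mono hpwq hstepd
      _ = expec (fun e => q e / p) (fun Q =>
            expec (fun _ => p) (fun A => bestVal 𝓘 (setWeight w) (Q ∩ A))) := by
          rw [expec_inter]
          congr 1
          funext e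
          exact (div_mul_cancel₀ (q e) hp0.ne').symm
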